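/- Let R > 0, C > 0, M > 0 and L > 0. Let b : ℝ^d → ℝ^d satisfy, for all x, y ∈ ℝ^d with |x| ≤ R + 1 and |y| ≤ R + 1, the bounds ⟨b(x) − b(y), x − y⟩ ≤ C |x − y|² and |b(y)| ≤ √M. Let η : ℝ^d → ℝ satisfy 0 ≤ η(x) ≤ 1 for all x, η(x) = 1 for |x| ≤ R, η(x) = 0 for |x| > R + 1, and |η(x) − η(y)| ≤ L |x − y| for all x, y. Then for ALL x, y ∈ ℝ^d one has ⟨η(x) b(x) − η(y) b(y), x − y⟩ ≤ (C + √M · L) |x − y|². -/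
import Mathlib


open scoped RealInnerProductSpace

theorem truncated_drift_one_sided_lipschitz {d : ℕ}
    (R C M L : ℝ) (hR : 0 < R) (hC : 0 < C) (hM : 0 < M) (hL : 0 < L)
    (b : EuclideanSpace ℝ (Fin d) → EuclideanSpace ℝ (Fin d))
    (η : EuclideanSpace ℝ (Fin d) → ℝ)
    (hb_osl : ∀ x y : EuclideanSpace ℝ (Fin d), ‖x‖ ≤ R + 1 → ‖y‖ ≤ R + 1 →
        ⟪b x - b y, x - y⟫ ≤ C * ‖x - y‖ ^ 2)
    (hb_bdd : ∀ y : EuclideanSpace ℝ (Fin d), ‖y‖ ≤ R + 1 → ‖b y‖ ≤ Real.sqrt M)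
    (hη01 : ∀ x, 0 ≤ η x ∧ η x ≤ 1)
    (hη1 : ∀ x : EuclideanSpace ℝ (Fin d), ‖x‖ ≤ R → η x = 1)
    (hη0 : ∀ x : EuclideanSpace ℝ (Fin d), R + 1 < ‖x‖ → η x = 0)
    (hηLip : ∀ x y : EuclideanSpace ℝ (Fin d), |η x - η y| ≤ L * ‖x - y‖) :
    ∀ x y : EuclideanSpace ℝ (Fin d),
      ⟪η x • b x - η y • b y, x - y⟫ ≤ (C + Real.sqrt M * L) * ‖x - y‖ ^ 2 := by
  intro x y
  have hM0 : 0 ≤ Real.sqrt M := Real.sqrt_nonneg M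
  have hv0 : (0:ℝ) ≤ ‖x - y‖ := norm_nonneg _
  by_cases hx : ‖x‖ ≤ R + 1 <;> by_cases hy : ‖y‖ ≤ R + 1
  · -- both inside
    have key : η x • b x - η y • b y = η x • (b x - b y) + (η x - η y) • b y := by
      rw [smul_sub, sub_smul]; abel
    rw [key, inner_add_left, real_inner_smul_left, real_inner_smul_left]
    have h1 : η x * ⟪b x - b y, x - y⟫ ≤ C * ‖x - y‖ ^ 2 := by
      have hosl := hb_osl x y hx hy
      rcases le_or_gt 0 (⟪b x - b y, x - y⟫) with h | h
      · nlinarith [(hη01 x).1, (hη01 x).2]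
      · nlinarith [(hη01 x).1, sq_nonneg ‖x - y‖, hC.le]
    have h2 : (η x - η y) * ⟪b y, x - y⟫ ≤ Real.sqrt M * L * ‖x - y‖ ^ 2 := by
      have hcs := abs_real_inner_le_norm (b y) (x - y)
      have hb := hb_bdd y hy
      have hl := hηLip x y
      calc (η x - η y) * ⟪b y, x - y⟫ ≤ |η x - η y| * |⟪b y, x - y⟫| := by
            rw [← abs_mul]; exact le_abs_self _
        _ ≤ (L * ‖x - y‖) * (Real.sqrt M * ‖x - y‖) := by
            apply mul_le_mul hl (hcs.trans (by gcongr)) (abs_nonneg _)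
            positivity
        _ = Real.sqrt M * L * ‖x - y‖ ^ 2 := by ring
    linarith
  · -- x inside, y outside
    have hy0 : η y = 0 := hη0 y (not_le.mp hy)
    have hcs := abs_real_inner_le_norm (b x) (x - y)
    have hb := hb_bdd x hx
    have hl := hηLip x y
    rw [hy0, sub_zero, abs_of_nonneg (hη01 x).1] at hl
    rw [hy0, zero_smul, sub_zero, real_inner_smul_left]
    calc η x * ⟪b x, x - y⟫ ≤ |η x| * |⟪b x, x - y⟫| := by
          rw [← abs_mul]; exact le_abs_self _
      _ ≤ (L * ‖x - y‖) * (Real.sqrt M * ‖x - y‖) := by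
          rw [abs_of_nonneg (hη01 x).1]
          apply mul_le_mul hl (hcs.trans (by gcongr)) (abs_nonneg _)
          positivity
      _ ≤ (C + Real.sqrt M * L) * ‖x - y‖ ^ 2 := by nlinarith [sq_nonneg ‖x - y‖]
  · -- x outside, y inside
    have hx0 : η x = 0 := hη0 x (not_le.mp hx)
    have hcs := abs_real_inner_le_norm (b y) (x - y)
    have hb := hb_bdd y hy
    have hl := hηLip x y
    rw [hx0, zero_sub, abs_neg, abs_of_nonneg (hη01 y).1] at hl
    rw [hx0, zero_smul, zero_sub, inner_neg_left, real_inner_smul_left]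
    calc -(η y * ⟪b y, x - y⟫) ≤ |η y| * |⟪b y, x - y⟫| := by
          rw [← abs_mul]; exact (neg_le_abs _)
      _ ≤ (L * ‖x - y‖) * (Real.sqrt M * ‖x - y‖) := by
          rw [abs_of_nonneg (hη01 y).1]
          apply mul_le_mul hl (hcs.trans (by gcongr)) (abs_nonneg _)
          positivity
      _ ≤ (C + Real.sqrt M * L) * ‖x - y‖ ^ 2 := by nlinarith [sq_nonneg ‖x - y‖]
  · -- both outside
    rw [hη0 x (not_le.mp hx), hη0 y (not_le.mp hy), zero_smul, zero_smul, sub_zero,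
      inner_zero_left]
    positivity
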